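/- Let S be a control semigroup, X a metric space, and n ∈ ℕ. Then asdim_S X ≤ n if and only if there exists f ∈ S such that for all sufficiently large s > 0 there is a cover U of X with s-multiplicity s-m(U) ≤ n+1 that is f(s)-bounded. -/

import Mathlib

open Filter Set Metric Topology
open scoped NNReal ENNReal

/-- A large-scale (asymptotic) dim-control function: continuous, increasing,
eventually at least the identity, tending to infinity. -/
def IsLSControl (f : ℝ≥0 → ℝ≥0) : Prop :=
  Continuous f ∧ Monotone f ∧ (∀ᶠ x in atTop, x ≤ f x) ∧ Tendsto f atTop atTop

/-- Asymptotically linear: coincides with a linear function on a neighborhood of infinity. -/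
def IsAsympLinear (f : ℝ≥0 → ℝ≥0) : Prop :=
  ∃ a b : ℝ≥0, ∀ᶠ x in atTop, f x = a * x + b

/-- A (large-scale) control semigroup. -/
def IsControlSemigroup (S : Set (ℝ≥0 → ℝ≥0)) : Prop :=
  (∀ f ∈ S, IsLSControl f) ∧
  (∀ f, IsLSControl f → IsAsympLinear f → f ∈ S) ∧
  (∀ f ∈ S, ∀ g ∈ S, f ∘ g ∈ S)

/-- A family of subsets is `s`-disjoint if distinct members are at distance `> s`. -/
def SDisjoint {X : Type*} [MetricSpace X] (s : ℝ≥0) (𝒰 : Set (Set X)) : Prop :=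
  ∀ U ∈ 𝒰, ∀ V ∈ 𝒰, U ≠ V → ∀ x ∈ U, ∀ y ∈ V, (s : ℝ) < dist x y

/-- A family of subsets is `D`-bounded if each member has diameter at most `D`. -/
def BoundedBy {X : Type*} [MetricSpace X] (D : ℝ≥0) (𝒰 : Set (Set X)) : Prop :=
  ∀ U ∈ 𝒰, EMetric.diam U ≤ (D : ℝ≥0∞)

/-- `asdim_S X ≤ n`. -/
def ASDimLE (S : Set (ℝ≥0 → ℝ≥0)) (X : Type*) [MetricSpace X] (n : ℕ) : Prop :=
  ∃ f ∈ S, ∃ s₀ : ℝ≥0, ∀ s : ℝ≥0, s₀ ≤ s →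
    ∃ 𝒰 : Fin (n + 1) → Set (Set X),
      (⋃ i, ⋃₀ 𝒰 i) = univ ∧ ∀ i, SDisjoint s (𝒰 i) ∧ BoundedBy (f s) (𝒰 i)

/-- The `S`-controlled asymptotic dimension, as an element of `ℕ∞`. -/
noncomputable def ASDim (S : Set (ℝ≥0 → ℝ≥0)) (X : Type*) [MetricSpace X] : ℕ∞ :=
  sInf {k : ℕ∞ | ∃ n : ℕ, k = n ∧ ASDimLE S X n}

/-- `S₁ ⪯ S₂` : `S₂` is finer than `S₁`. -/
def Preceq (S₁ S₂ : Set (ℝ≥0 → ℝ≥0)) : Prop :=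
  ∀ f ∈ S₂, ∃ g ∈ S₁, ∀ᶠ x in atTop, f x ≤ g x

lemma linear_mem {S : Set (ℝ≥0 → ℝ≥0)} (hS : IsControlSemigroup S) (a : ℝ≥0) (ha : 1 ≤ a) :
    (fun x => a * x) ∈ S := by
  refine hS.2.1 _ ⟨continuous_const.mul continuous_id, fun x y h => mul_le_mul_right h a,
    Eventually.of_forall fun x => le_mul_of_one_le_left zero_le ha,
    tendsto_atTop_mono (fun x => le_mul_of_one_le_left zero_le ha) tendsto_id⟩
    ⟨a, 0, Eventually.of_forall fun x => (add_zero _).symm⟩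

lemma asdimLE_mono {S : Set (ℝ≥0 → ℝ≥0)} {X : Type*} [MetricSpace X] {m n : ℕ} (h : m ≤ n)
    (hm : ASDimLE S X m) : ASDimLE S X n := by
  obtain ⟨f, hf, s₀, H⟩ := hm
  refine ⟨f, hf, s₀, fun s hs => ?_⟩
  obtain ⟨𝒰, hcov, hprop⟩ := H s hs
  refine ⟨fun i => if h' : (i : ℕ) < m + 1 then 𝒰 ⟨i, h'⟩ else ∅, ?_, ?_⟩
  · apply eq_univ_of_univ_subset
    rw [← hcov]
    refine iUnion_subset fun i => ?_
    have : (⟨(i : ℕ), by omega⟩ : Fin (n+1)) = ⟨(i:ℕ), by omega⟩ := rfl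
    refine subset_iUnion_of_subset ⟨(i : ℕ), by omega⟩ ?_
    simp [i.isLt]
  · intro i
    by_cases h' : (i : ℕ) < m + 1
    · simpa [h'] using hprop ⟨i, h'⟩
    · simp [h', SDisjoint, BoundedBy]

lemma asdim_le_iff {S : Set (ℝ≥0 → ℝ≥0)} {X : Type*} [MetricSpace X] (n : ℕ) :
    ASDim S X ≤ (n : ℕ∞) ↔ ASDimLE S X n := by
  constructor
  · intro h
    by_contra hn
    have key : ∀ m : ℕ, m ≤ n → ¬ ASDimLE S X m := fun m hm hLE => hn (asdimLE_mono hm hLE)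
    have : ((n : ℕ∞) + 1) ≤ ASDim S X := by
      refine le_sInf fun k hk => ?_
      obtain ⟨m, rfl, hm⟩ := hk
      have : n < m := by
        by_contra h'
        exact key m (by omega) hm
      exact_mod_cast Nat.succ_le_of_lt this
    have h2 := this.trans h
    have : ((n:ℕ∞) + 1) ≤ n := h2
    rw [show ((n:ℕ∞)+1) = ((n+1 : ℕ) : ℕ∞) by push_cast; ring, Nat.cast_le] at this
    omega
  · intro h
    exact sInf_le ⟨n, rfl, h⟩

lemma forward {S : Set (ℝ≥0 → ℝ≥0)} (hS : IsControlSemigroup S) {X : Type*} [MetricSpace X]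
    {n : ℕ} (h : ASDimLE S X n) :
    ∃ f ∈ S, ∃ s₀ : ℝ≥0, ∀ s : ℝ≥0, s₀ ≤ s →
        ∃ 𝒰 : Set (Set X), ⋃₀ 𝒰 = univ ∧
          (∀ x : X, {U | U ∈ 𝒰 ∧ (U ∩ Metric.ball x (s : ℝ)).Nonempty}.encard ≤ (n + 1 : ℕ∞)) ∧
          BoundedBy (f s) 𝒰 := by
  obtain ⟨f, hf, s₀, H⟩ := h
  refine ⟨f ∘ (fun x => 2 * x), hS.2.2 f hf _ (linear_mem hS 2 one_le_two), s₀, fun s hs => ?_⟩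
  obtain ⟨𝒰, hcov, hprop⟩ := H (2 * s) (hs.trans (le_mul_of_one_le_left zero_le one_le_two))
  refine ⟨⋃ i, 𝒰 i, by rw [sUnion_iUnion]; exact hcov, fun x => ?_, fun U hU => ?_⟩
  · set T := {U | U ∈ ⋃ i, 𝒰 i ∧ (U ∩ ball x (s : ℝ)).Nonempty} with hT
    have hsel : ∀ U : Set X, ∃ i : Fin (n+1), U ∈ T → U ∈ 𝒰 i := by
      intro U
      by_cases hU : U ∈ T
      · obtain ⟨i, hi⟩ := mem_iUnion.1 hU.1
        exact ⟨i, fun _ => hi⟩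
      · exact ⟨0, fun h => absurd h hU⟩
    choose g hg using hsel
    have hinj : InjOn g T := by
      intro U hU V hV hgUV
      by_contra hne
      obtain ⟨u, huU, hux⟩ := hU.2
      obtain ⟨v, hvV, hvx⟩ := hV.2
      have hd := (hprop (g U)).1 U (hg U hU) V (hgUV ▸ hg V hV) hne u huU v hvV
      have : dist u v < 2 * s := by
        calc dist u v ≤ dist u x + dist x v := dist_triangle _ _ _
        _ < s + s := by
          have h1 := mem_ball.1 hux
          have h2 := mem_ball.1 hvx
          rw [dist_comm x v]
          exact add_lt_add h1 h2
        _ = 2 * s := by ring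
      rw [NNReal.coe_mul] at hd
      push_cast at hd
      linarith
    calc T.encard = (g '' T).encard := (hinj.encard_image).symm
      _ ≤ (univ : Set (Fin (n+1))).encard := encard_le_encard (subset_univ _)
      _ ≤ (n + 1 : ℕ∞) := by simp [Set.encard_univ]
  · obtain ⟨i, hi⟩ := mem_iUnion.1 hU
    exact (hprop i).2 U hi

lemma backward {S : Set (ℝ≥0 → ℝ≥0)} (hS : IsControlSemigroup S) {X : Type*} [MetricSpace X]
    {n : ℕ}
    (h : ∃ f ∈ S, ∃ s₀ : ℝ≥0, ∀ s : ℝ≥0, s₀ ≤ s →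
        ∃ 𝒰 : Set (Set X), ⋃₀ 𝒰 = univ ∧
          (∀ x : X, {U | U ∈ 𝒰 ∧ (U ∩ Metric.ball x (s : ℝ)).Nonempty}.encard ≤ (n + 1 : ℕ∞)) ∧
          BoundedBy (f s) 𝒰) :
    ASDimLE S X n := by
  classical
  obtain ⟨f, hf, s₀, H⟩ := h
  obtain ⟨x₁, hx₁⟩ := eventually_atTop.1 (hS.1 f hf).2.2.1
  set c : ℝ≥0 := (n : ℝ≥0) + 3 with hc
  have hc1 : (1 : ℝ≥0) ≤ c := by
    simp only [hc]
    calc (1:ℝ≥0) ≤ 3 := by norm_num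
    _ ≤ (n:ℝ≥0) + 3 := le_add_of_nonneg_left zero_le
  refine ⟨(fun x => 3 * x) ∘ f ∘ (fun x => c * x),
    hS.2.2 _ (hS.2.2 _ (linear_mem hS 3 (by norm_num)) f hf) _ (linear_mem hS c hc1),
    max (max s₀ x₁) 1, fun s hs => ?_⟩
  have hs1 : (1 : ℝ≥0) ≤ s := le_trans (le_max_right _ _) hs
  have hspos : (0 : ℝ≥0) < s := lt_of_lt_of_le one_pos hs1
  have hss₀ : s₀ ≤ s := le_trans (le_trans (le_max_left _ _) (le_max_left _ _)) hs
  have hsx₁ : x₁ ≤ s := le_trans (le_trans (le_max_right _ _) (le_max_left _ _)) hs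
  set t : ℝ≥0 := c * s with ht
  have hts : s ≤ t := le_mul_of_one_le_left zero_le hc1
  obtain ⟨𝒰, hcov, hmult, hbdd⟩ := H t (hss₀.trans hts)
  have hft : t ≤ f t := hx₁ t (hsx₁.trans hts)
  have hcov' : ∀ x : X, ∃ U ∈ 𝒰, x ∈ U := by
    intro x
    have : x ∈ ⋃₀ 𝒰 := hcov ▸ mem_univ x
    exact mem_sUnion.1 this
  -- the depth function
  set φ : Set X → X → ℝ≥0∞ := fun U x => EMetric.infEdist x (Metric.thickening (t : ℝ) U)ᶜ
    with hφ
  set sE : ℝ≥0∞ := (s : ℝ≥0∞) with hsE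
  have hsE0 : sE ≠ 0 := by simpa [hsE] using hspos.ne'
  have hsEtop : sE ≠ ⊤ := ENNReal.coe_ne_top
  have hmem : ∀ (U : Set X) (x : X), 0 < φ U x → x ∈ Metric.thickening (t : ℝ) U := by
    intro U x hpos
    by_contra hx
    rw [hφ] at hpos
    simp only [EMetric.infEdist_zero_of_mem (mem_compl hx)] at hpos
    exact hpos.ne' (EMetric.infEdist_zero_of_mem (mem_compl hx))
  have hdeep : ∀ (U : Set X) (x : X), x ∈ U → (t : ℝ≥0∞) ≤ φ U x := by
    intro U x hxU
    refine EMetric.le_infEdist.2 fun y hy => ?_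
    by_contra hlt
    push_neg at hlt
    apply hy
    have : dist y x < (t : ℝ) := by
      rw [dist_comm, dist_nndist]
      exact_mod_cast edist_lt_coe.1 hlt
    exact Metric.mem_thickening_iff.2 ⟨x, hxU, this⟩
  have hlip : ∀ (U : Set X) (x y : X), φ U x ≤ φ U y + edist x y := fun U x y =>
    EMetric.infEdist_le_infEdist_add_edist
  have hposmem : ∀ (U : Set X) (x : X), 0 < φ U x → (U ∩ Metric.ball x (t : ℝ)).Nonempty := by
    intro U x hpos
    obtain ⟨z, hzU, hz⟩ := Metric.mem_thickening_iff.1 (hmem U x hpos)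
    exact ⟨z, hzU, by rwa [mem_ball, dist_comm]⟩
  -- the families
  set W : Fin (n+1) → Set (Set X) → Set X := fun j σ =>
    {x | (∀ U ∈ σ, ((j : ℕ) + 2 : ℝ≥0∞) * sE < φ U x) ∧
      ∀ U ∈ 𝒰, U ∉ σ → φ U x ≤ ((j : ℕ) + 1 : ℝ≥0∞) * sE} with hW
  refine ⟨fun j => {W' | ∃ σ, σ ⊆ 𝒰 ∧ W' = W j σ}, ?_, fun j => ⟨?_, ?_⟩⟩
  · -- covering
    refine eq_univ_iff_forall.2 fun x => ?_
    obtain ⟨U₀, hU₀𝒰, hxU₀⟩ := hcov' x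
    have hU₀deep : (t : ℝ≥0∞) ≤ φ U₀ x := hdeep U₀ x hxU₀
    have hAcard : {U | U ∈ 𝒰 ∧ 0 < φ U x}.encard ≤ (n + 1 : ℕ∞) := by
      refine le_trans (Set.encard_le_encard fun U hU => ?_) (hmult x)
      exact ⟨hU.1, hposmem U x hU.2⟩
    -- pigeonhole: some gap interval is free
    have hgap : ∃ j : Fin (n+1), ∀ U ∈ 𝒰,
        ¬(((j : ℕ) + 1 : ℝ≥0∞) * sE < φ U x ∧ φ U x ≤ ((j : ℕ) + 2 : ℝ≥0∞) * sE) := by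
      by_contra hcon
      push_neg at hcon
      choose V hV𝒰 hVlb hVub using hcon
      set ι : Fin (n+2) → Set X := fun i =>
        if h : (i : ℕ) < n + 1 then V ⟨i, h⟩ else U₀ with hι
      have hlb : ∀ i : Fin (n+2), ((i : ℕ) + 1 : ℝ≥0∞) * sE < φ (ι i) x := by
        intro i
        by_cases h : (i : ℕ) < n + 1
        · simp only [hι, dif_pos h]; exact hVlb ⟨i, h⟩
        · have hin : (i : ℕ) = n + 1 := by omega
          simp only [hι, h, dif_neg, not_false_iff]
          refine lt_of_lt_of_le ?_ hU₀deep
          have : ((i : ℕ) + 1 : ℝ≥0∞) * sE < ((n : ℕ) + 3 : ℝ≥0∞) * sE := by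
            refine ENNReal.mul_lt_mul_left hsE0 hsEtop ?_
            rw [hin]
            exact_mod_cast (show ((n:ℕ)+1+1 : ℕ) < n+3 by omega)
          refine lt_of_lt_of_le this ?_
          have : ((n : ℕ) + 3 : ℝ≥0∞) * sE = ((c : ℝ≥0) * s : ℝ≥0∞) := by
            rw [hc, hsE]
            push_cast
            ring
          rw [this, ht]
          push_cast
          exact le_refl _
      have hub : ∀ i : Fin (n+2), (i : ℕ) < n + 1 → φ (ι i) x ≤ ((i : ℕ) + 2 : ℝ≥0∞) * sE := by
        intro i h
        simp only [hι, dif_pos h]; exact hVub ⟨i, h⟩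
      have hmono : ∀ i i' : Fin (n+2), (i : ℕ) < (i' : ℕ) → φ (ι i) x < φ (ι i') x := by
        intro i i' hlt
        have hi : (i : ℕ) < n + 1 := by omega
        refine lt_of_le_of_lt (hub i hi) (lt_of_le_of_lt ?_ (hlb i'))
        refine mul_le_mul_left ?_ sE
        have : ((i : ℕ) + 2 : ℝ≥0∞) = (((i : ℕ) + 2 : ℕ) : ℝ≥0∞) := by push_cast; ring
        rw [this]
        have : ((i' : ℕ) + 1 : ℝ≥0∞) = (((i' : ℕ) + 1 : ℕ) : ℝ≥0∞) := by push_cast; ring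
        rw [this]
        exact_mod_cast by omega
      have hinj : Function.Injective ι := by
        intro i i' hii
        by_contra hne
        rcases lt_or_gt_of_ne (fun h : (i : ℕ) = (i' : ℕ) => hne (Fin.ext h)) with h | h
        · exact absurd (hii ▸ hmono i i' h) (lt_irrefl _)
        · exact absurd (hii ▸ hmono i' i h) (lt_irrefl _)
      have hsub : range ι ⊆ {U | U ∈ 𝒰 ∧ 0 < φ U x} := by
        rintro _ ⟨i, rfl⟩
        constructor
        · by_cases h : (i : ℕ) < n + 1
          · simp only [hι, dif_pos h]; exact hV𝒰 ⟨i, h⟩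
          · simp only [hι, dif_neg h]; exact hU₀𝒰
        · refine lt_trans ?_ (hlb i)
          refine ENNReal.mul_pos ?_ hsE0
          intro hcon0
          simp [add_eq_zero] at hcon0
      have hcard : (n + 2 : ℕ∞) ≤ {U | U ∈ 𝒰 ∧ 0 < φ U x}.encard := by
        calc (n + 2 : ℕ∞) = (univ : Set (Fin (n+2))).encard := by
              simp [Set.encard_univ]
          _ = (ι '' univ).encard := (Set.InjOn.encard_image (hinj.injOn)).symm
          _ ≤ _ := Set.encard_le_encard (by rw [image_univ]; exact hsub)
      have : (n + 2 : ℕ∞) ≤ (n + 1 : ℕ∞) := hcard.trans hAcard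
      have h2 : ((n + 2 : ℕ) : ℕ∞) ≤ ((n + 1 : ℕ) : ℕ∞) := by push_cast at this ⊢; exact this
      rw [Nat.cast_le] at h2
      omega
    obtain ⟨j, hj⟩ := hgap
    refine mem_iUnion.2 ⟨j, ?_⟩
    refine mem_sUnion.2 ⟨W j {U | U ∈ 𝒰 ∧ ((j : ℕ) + 1 : ℝ≥0∞) * sE < φ U x},
      ⟨_, fun U hU => hU.1, rfl⟩, ?_⟩
    constructor
    · intro U hU
      rcases (hj U hU.1) with hcon
      by_contra hle
      push_neg at hle
      exact hcon ⟨hU.2, hle⟩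
    · intro U hU𝒰 hUσ
      by_contra hgt
      push_neg at hgt
      exact hUσ ⟨hU𝒰, hgt⟩
  · -- disjointness
    rintro W₁ ⟨σ, hσ, rfl⟩ W₂ ⟨τ, hτ, rfl⟩ hne x hx y hy
    have hστ : σ ≠ τ := fun h => hne (by rw [h])
    have key : ∀ (σ' τ' : Set (Set X)), σ' ⊆ 𝒰 → τ' ⊆ 𝒰 → ∀ U, U ∈ σ' → U ∉ τ' →
        ∀ a b : X, a ∈ W j σ' → b ∈ W j τ' → (s : ℝ) < dist a b := by
      intro σ' τ' hσ' hτ' U hUσ hUτ a b ha hb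
      have h1 : ((j : ℕ) + 2 : ℝ≥0∞) * sE < φ U a := ha.1 U hUσ
      have h2 : φ U b ≤ ((j : ℕ) + 1 : ℝ≥0∞) * sE := hb.2 U (hσ' hUσ) hUτ
      have h3 : φ U a ≤ φ U b + edist a b := hlip U a b
      have h4 : ((j : ℕ) + 1 : ℝ≥0∞) * sE + sE < ((j : ℕ) + 1 : ℝ≥0∞) * sE + edist a b := by
        calc ((j : ℕ) + 1 : ℝ≥0∞) * sE + sE = ((j : ℕ) + 2 : ℝ≥0∞) * sE := by ring
        _ < φ U a := h1
        _ ≤ φ U b + edist a b := h3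
        _ ≤ ((j : ℕ) + 1 : ℝ≥0∞) * sE + edist a b := add_le_add_left h2 _
      have h5 : sE < edist a b := by
        refine (ENNReal.add_lt_add_iff_left ?_).1 h4
        exact ENNReal.mul_ne_top (by simp) hsEtop
      rw [hsE, edist_nndist] at h5
      have : s < nndist a b := by exact_mod_cast h5
      rw [dist_nndist]
      exact_mod_cast this
    obtain ⟨U, hU⟩ : ∃ U, (U ∈ σ ∧ U ∉ τ) ∨ (U ∈ τ ∧ U ∉ σ) := by
      by_contra hcon
      push_neg at hcon
      exact hστ (Set.Subset.antisymm (fun U h => (hcon U).1 h) (fun U h => (hcon U).2 h))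
    rcases hU with ⟨h1, h2⟩ | ⟨h1, h2⟩
    · exact key σ τ hσ hτ U h1 h2 x y hx hy
    · rw [dist_comm]
      exact key τ σ hτ hσ U h1 h2 y x hy hx
  · -- boundedness
    rintro W' ⟨σ, hσ, rfl⟩
    rcases eq_empty_or_nonempty σ with rfl | ⟨U, hUσ⟩
    · have : W j ∅ = ∅ := by
        refine eq_empty_iff_forall_notMem.2 fun x hx => ?_
        obtain ⟨U₀, hU₀𝒰, hxU₀⟩ := hcov' x
        have h1 : φ U₀ x ≤ ((j : ℕ) + 1 : ℝ≥0∞) * sE := hx.2 U₀ hU₀𝒰 (notMem_empty _)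
        have h2 : (t : ℝ≥0∞) ≤ φ U₀ x := hdeep U₀ x hxU₀
        have h3 : ((j : ℕ) + 1 : ℝ≥0∞) * sE < (t : ℝ≥0∞) := by
          have : ((j : ℕ) + 1 : ℝ≥0∞) * sE < ((n : ℕ) + 3 : ℝ≥0∞) * sE := by
            refine ENNReal.mul_lt_mul_left hsE0 hsEtop ?_
            have := j.isLt
            exact_mod_cast (show ((j:ℕ) + 1 : ℕ) < n + 3 by omega)
          refine lt_of_lt_of_le this ?_
          rw [ht, hc, hsE]
          push_cast
          exact le_refl _
        exact absurd (h2.trans h1) (not_le.2 h3)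
      rw [this]
      simp [BoundedBy]
      exact EMetric.diam_empty.le.trans bot_le
    · have hsub : W j σ ⊆ Metric.thickening (t : ℝ) U := by
        intro x hx
        refine hmem U x ?_
        refine lt_trans ?_ (hx.1 U hUσ)
        refine ENNReal.mul_pos ?_ hsE0
        intro hcon0
        simp [add_eq_zero] at hcon0
      calc EMetric.diam (W j σ) ≤ EMetric.diam (Metric.thickening (t : ℝ) U) :=
            EMetric.diam_mono hsub
        _ ≤ EMetric.diam U + 2 * (t : ℝ≥0∞) := Metric.ediam_thickening_le t
        _ ≤ (f t : ℝ≥0∞) + 2 * (f t : ℝ≥0∞) := by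
            refine add_le_add (hbdd U (hσ hUσ)) (mul_le_mul_right ?_ 2)
            exact_mod_cast hft
        _ = ((3 * f t : ℝ≥0) : ℝ≥0∞) := by push_cast; ring
        _ ≤ _ := le_refl _

/-- `asdim_S X ≤ n` iff there is `f ∈ S` such that for all sufficiently large `s`
there is an `f(s)`-bounded cover of `X` whose `s`-multiplicity is at most `n+1`. -/
theorem asdim_le_iff_smultiplicity (S : Set (ℝ≥0 → ℝ≥0)) (hS : IsControlSemigroup S)
    (X : Type*) [MetricSpace X] (n : ℕ) :
    ASDim S X ≤ (n : ℕ∞) ↔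
      ∃ f ∈ S, ∃ s₀ : ℝ≥0, ∀ s : ℝ≥0, s₀ ≤ s →
        ∃ 𝒰 : Set (Set X), ⋃₀ 𝒰 = univ ∧
          (∀ x : X, {U | U ∈ 𝒰 ∧ (U ∩ Metric.ball x (s : ℝ)).Nonempty}.encard ≤ (n + 1 : ℕ∞)) ∧
          BoundedBy (f s) 𝒰 := by
  rw [asdim_le_iff]
  exact ⟨fun h => forward hS h, fun h => backward hS h⟩
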